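/- Let μ : ℕ → (0,∞). Define Δ_r(s) = μ(r+s)/μ(r) − μ(r+s−1)/μ(r−1) for integers r ≥ 1, s ≥ 0, and define H_α(β,k) for α ≥ 1, 1 ≤ k ≤ β by the recursion H_α(β,β) = Δ_α(β)·μ(0) for β ≥ 1, and H_α(β,k) = Δ_α(k)·μ(β−k) + Σ_{l=1}^{β−k} Δ_α(l)·H_l(β−l,k) for β ≥ 2 and 1 ≤ k ≤ β−1. Let g^k_{*,0} ≥ 0 be arbitrary for k ≥ 1, and define g^α_{*,β} := g^α_{*,0} + (1/μ(β))·Σ_{k=1}^{β} H_α(β,k)·g^k_{*,0} for α ≥ 1, β ≥ 1. Then for all β ≥ 1, Σ_{k=1}^{β} μ(k)·μ(β−k)·g^k_{*,β−k} = μ(0)·μ(β)·Σ_{k=1}^{β} g^k_{*,0}. -/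

import Mathlib

/-- the identity `A(0,β) = Σ_{k ≤ β} g^k_{*,0} = -A(β,0)` for
mass-migration target processes with rates defined through the coefficients
`H`. -/
theorem stmt8
    (μ : ℕ → ℝ) (hμ : ∀ n : ℕ, 0 < μ n)
    (Δ : ℕ → ℕ → ℝ)
    (hΔ : ∀ r s : ℕ, 1 ≤ r →
      Δ r s = μ (r + s) / μ r - μ (r + s - 1) / μ (r - 1))
    (H : ℕ → ℕ → ℕ → ℝ)
    (hHdiag : ∀ α β : ℕ, 1 ≤ α → 1 ≤ β → H α β β = Δ α β * μ 0)
    (hHrec : ∀ α β k : ℕ, 1 ≤ α → 2 ≤ β → 1 ≤ k → k ≤ β - 1 →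
      H α β k = Δ α k * μ (β - k)
        + ∑ l ∈ Finset.Icc 1 (β - k), Δ α l * H l (β - l) k)
    (g0 : ℕ → ℝ) (hg0nn : ∀ k : ℕ, 0 ≤ g0 k)
    (gs : ℕ → ℕ → ℝ)
    (hgs0 : ∀ α : ℕ, gs α 0 = g0 α)
    (hgs : ∀ α β : ℕ, 1 ≤ α → 1 ≤ β →
      gs α β = g0 α + (1 / μ β) * ∑ k ∈ Finset.Icc 1 β, H α β k * g0 k) :
    ∀ β : ℕ, 1 ≤ β →
      ∑ k ∈ Finset.Icc 1 β, μ k * μ (β - k) * gs k (β - k)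
        = μ 0 * μ β * ∑ k ∈ Finset.Icc 1 β, g0 k := by
  -- triangular sum swap
  have swap : ∀ (m : ℕ) (f : ℕ → ℕ → ℝ),
      ∑ l ∈ Finset.Icc 1 m, ∑ t ∈ Finset.Icc 1 (m - l), f l t
        = ∑ t ∈ Finset.Icc 1 m, ∑ l ∈ Finset.Icc 1 (m - t), f l t := by
    intro m f
    have key : ∀ (g : ℕ → ℕ → ℝ) (a : ℕ), a ∈ Finset.Icc 1 m →
        ∑ b ∈ Finset.Icc 1 (m - a), g a b
          = ∑ b ∈ Finset.Icc 1 m, if a + b ≤ m then g a b else 0 := by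
      intro g a ha
      rw [← Finset.sum_filter]
      congr 1
      ext b
      simp only [Finset.mem_filter, Finset.mem_Icc]
      omega
    rw [Finset.sum_congr rfl (key f), Finset.sum_comm]
    refine Finset.sum_congr rfl fun t ht => ?_
    rw [key (fun a b => f b a) t ht]
    exact Finset.sum_congr rfl fun l _ => by rw [Nat.add_comm t l]
  -- telescoping sum of Δ
  have tele : ∀ (n j : ℕ), ∑ l ∈ Finset.Icc 1 n, Δ l j = μ (n + j) / μ n - μ j / μ 0 := by
    intro n j
    induction n with
    | zero => simp
    | succ n ih =>
      rw [Finset.sum_Icc_succ_top (by omega), ih, hΔ (n + 1) j (by omega)]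
      have h1 : n + 1 + j - 1 = n + j := by omega
      have h2 : n + 1 - 1 = n := by omega
      rw [h1, h2]
      ring
  -- additive form of the recursion
  have rec' : ∀ α k m : ℕ, 1 ≤ α → 1 ≤ k → 1 ≤ m →
      H α (k + m) k = Δ α k * μ m
        + ∑ l ∈ Finset.Icc 1 m, Δ α l * H l (k + m - l) k := by
    intro α k m hα hk hm
    have := hHrec α (k + m) k hα (by omega) hk (by omega)
    simpa using this
  -- dual recursion
  have dual : ∀ m : ℕ, ∀ α j : ℕ, 1 ≤ α → 1 ≤ j →
      H α (j + m) j = Δ α j * μ m + ∑ l ∈ Finset.Icc 1 m, Δ l j * H α m l := by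
    intro m
    induction m using Nat.strong_induction_on with
    | _ m ih =>
      intro α j hα hj
      rcases Nat.eq_zero_or_pos m with hm | hm
      · subst hm
        simp [hHdiag α j hα hj]
      rw [rec' α j m hα hj hm]
      congr 1
      have expand : ∀ l ∈ Finset.Icc 1 m,
          Δ α l * H l (j + m - l) j
            = Δ α l * Δ l j * μ (m - l)
              + ∑ t ∈ Finset.Icc 1 (m - l), Δ α l * (Δ t j * H l (m - l) t) := by
        intro l hl
        simp only [Finset.mem_Icc] at hl
        have hml : j + m - l = j + (m - l) := by omega
        rw [hml, ih (m - l) (by omega) l j hl.1 hj, mul_add, Finset.mul_sum]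
        refine congrArg₂ _ (by ring) (Finset.sum_congr rfl fun t _ => by ring)
      rw [Finset.sum_congr rfl expand, Finset.sum_add_distrib,
        swap m (fun l t => Δ α l * (Δ t j * H l (m - l) t))]
      have inner : ∀ t ∈ Finset.Icc 1 m,
          ∑ l ∈ Finset.Icc 1 (m - t), Δ α l * (Δ t j * H l (m - l) t)
            = Δ t j * (H α m t - Δ α t * μ (m - t)) := by
        intro t ht
        simp only [Finset.mem_Icc] at ht
        rcases Nat.eq_or_lt_of_le ht.2 with h | h
        · subst h
          simp [hHdiag α t hα ht.1]
        · have hmt : 1 ≤ m - t := by omega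
          have hrec := rec' α t (m - t) hα ht.1 hmt
          have htm : t + (m - t) = m := by omega
          rw [htm] at hrec
          rw [hrec, add_sub_cancel_left, Finset.mul_sum]
          refine Finset.sum_congr rfl fun l hl => ?_
          simp only [Finset.mem_Icc] at hl
          have hml : m - l = t + (m - t) - l := by omega
          rw [hml]
          ring
      rw [Finset.sum_congr rfl inner]
      have : ∑ t ∈ Finset.Icc 1 m, Δ t j * (H α m t - Δ α t * μ (m - t))
          = ∑ t ∈ Finset.Icc 1 m, Δ t j * H α m t
            - ∑ t ∈ Finset.Icc 1 m, Δ α t * Δ t j * μ (m - t) := by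
        rw [← Finset.sum_sub_distrib]
        exact Finset.sum_congr rfl fun t ht => by ring
      rw [this]
      ring
  -- key lemma
  have Tlem : ∀ m : ℕ, ∀ j : ℕ, 1 ≤ j →
      ∑ k ∈ Finset.Icc 1 m, μ k * H k (j + m - k) j
        = μ 0 * μ (j + m) - μ j * μ m := by
    intro m
    induction m using Nat.strong_induction_on with
    | _ m ih =>
      intro j hj
      rcases Nat.eq_zero_or_pos m with hm | hm
      · subst hm
        simp [mul_comm]
      have expand : ∀ k ∈ Finset.Icc 1 m,
          μ k * H k (j + m - k) j
            = μ k * Δ k j * μ (m - k)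
              + ∑ l ∈ Finset.Icc 1 (m - k), μ k * (Δ l j * H k (m - k) l) := by
        intro k hk
        simp only [Finset.mem_Icc] at hk
        have hmk : j + m - k = j + (m - k) := by omega
        rw [hmk, dual (m - k) k j hk.1 hj, mul_add, Finset.mul_sum]
        refine congrArg₂ _ (by ring) (Finset.sum_congr rfl fun l _ => by ring)
      rw [Finset.sum_congr rfl expand, Finset.sum_add_distrib,
        swap m (fun k l => μ k * (Δ l j * H k (m - k) l))]
      have inner : ∀ l ∈ Finset.Icc 1 m,
          ∑ k ∈ Finset.Icc 1 (m - l), μ k * (Δ l j * H k (m - k) l)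
            = Δ l j * (μ 0 * μ m - μ l * μ (m - l)) := by
        intro l hl
        simp only [Finset.mem_Icc] at hl
        have hIH := ih (m - l) (by omega) l hl.1
        have hlm : l + (m - l) = m := by omega
        rw [hlm] at hIH
        rw [← hIH, Finset.mul_sum]
        exact Finset.sum_congr rfl fun k hk => by ring
      rw [Finset.sum_congr rfl inner]
      have split : ∑ l ∈ Finset.Icc 1 m, Δ l j * (μ 0 * μ m - μ l * μ (m - l))
          = μ 0 * μ m * (∑ l ∈ Finset.Icc 1 m, Δ l j)
            - ∑ l ∈ Finset.Icc 1 m, μ l * Δ l j * μ (m - l) := by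
        rw [Finset.mul_sum, ← Finset.sum_sub_distrib]
        exact Finset.sum_congr rfl fun l hl => by ring
      rw [split, tele m j]
      have hm0 : μ m ≠ 0 := (hμ m).ne'
      have h00 : μ 0 ≠ 0 := (hμ 0).ne'
      have hadd : m + j = j + m := by omega
      rw [hadd]
      field_simp
      ring
  -- main proof
  intro β hβ
  have expand : ∀ k ∈ Finset.Icc 1 β,
      μ k * μ (β - k) * gs k (β - k)
        = μ k * μ (β - k) * g0 k
          + ∑ t ∈ Finset.Icc 1 (β - k), μ k * (H k (β - k) t * g0 t) := by
    intro k hk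
    simp only [Finset.mem_Icc] at hk
    rcases Nat.eq_or_lt_of_le hk.2 with h | h
    · subst h
      simp [hgs0]
    · have hbk : 1 ≤ β - k := by omega
      rw [hgs k (β - k) hk.1 hbk]
      have hne : μ (β - k) ≠ 0 := (hμ (β - k)).ne'
      rw [mul_add]
      refine congrArg₂ _ rfl ?_
      rw [show μ k * μ (β - k) * (1 / μ (β - k) *
            ∑ t ∈ Finset.Icc 1 (β - k), H k (β - k) t * g0 t)
          = μ k * ∑ t ∈ Finset.Icc 1 (β - k), H k (β - k) t * g0 t from by
        field_simp]
      rw [Finset.mul_sum]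
  rw [Finset.sum_congr rfl expand, Finset.sum_add_distrib,
    swap β (fun k t => μ k * (H k (β - k) t * g0 t))]
  have inner : ∀ t ∈ Finset.Icc 1 β,
      ∑ k ∈ Finset.Icc 1 (β - t), μ k * (H k (β - k) t * g0 t)
        = (μ 0 * μ β - μ t * μ (β - t)) * g0 t := by
    intro t ht
    simp only [Finset.mem_Icc] at ht
    have hT := Tlem (β - t) t ht.1
    have htb : t + (β - t) = β := by omega
    rw [htb] at hT
    rw [← hT, Finset.sum_mul]
    exact Finset.sum_congr rfl fun k hk => by ring
  rw [Finset.sum_congr rfl inner]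
  rw [Finset.mul_sum, ← Finset.sum_add_distrib]
  refine Finset.sum_congr rfl fun k hk => by ring
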